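/- Let W be a finite nonempty set, X ⊆ W, and σ : W → W a map with σ(W) ⊆ X and σ(a) ≠ a for every a ∈ X. Consider the simple graph G on vertex set W whose edges are the pairs {a, σ(a)} for a ∈ W. Then every connected component of G contains at least two distinct elements of X; consequently, the number of connected components of G is at most |X| / 2. -/

import Mathlib

/-- The simple graph on `W` whose edges are the pairs `{a, σ(a)}`, `a ∈ W`:
`a` and `b` are adjacent iff `a ≠ b` and (`b = σ(a)` or `a = σ(b)`). -/
def sigmaGraph {W : Type} (σ : W → W) : SimpleGraph W where
  Adj a b := a ≠ b ∧ (b = σ a ∨ a = σ b)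
  symm := ⟨fun a b h => ⟨h.1.symm, h.2.symm⟩⟩
  loopless := ⟨fun a h => h.1 rfl⟩

/-- If `σ : W → W` maps `W` into `X ⊆ W` and has no fixed point in `X`, then every
connected component of the graph with edge set `{ {a, σ(a)} : a ∈ W }` contains at least
two distinct elements of `X`; consequently the number of connected components is at most
`|X|/2` (i.e. twice the number of components is at most `|X|`). -/
theorem stmt11 (W : Type) [Fintype W] [DecidableEq W] [Nonempty W]
    (X : Finset W) (σ : W → W) (hσX : ∀ a : W, σ a ∈ X) (hσ : ∀ a ∈ X, σ a ≠ a) :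
    (∀ c : (sigmaGraph σ).ConnectedComponent, ∃ a b : W, a ∈ X ∧ b ∈ X ∧ a ≠ b ∧
      (sigmaGraph σ).connectedComponentMk a = c ∧
      (sigmaGraph σ).connectedComponentMk b = c) ∧
    2 * Nat.card (sigmaGraph σ).ConnectedComponent ≤ X.card := by
  classical
  have hne : ∀ w : W, w ≠ σ w := by
    intro w h
    exact hσ w (h ▸ hσX w) h.symm
  have key : ∀ c : (sigmaGraph σ).ConnectedComponent, ∃ a b : W, a ∈ X ∧ b ∈ X ∧ a ≠ b ∧
      (sigmaGraph σ).connectedComponentMk a = c ∧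
      (sigmaGraph σ).connectedComponentMk b = c := by
    intro c
    induction c using SimpleGraph.ConnectedComponent.ind with
    | _ w =>
      refine ⟨σ w, σ (σ w), hσX w, hσX (σ w), fun h => hσ (σ w) (hσX w) h.symm, ?_, ?_⟩
      · exact SimpleGraph.ConnectedComponent.sound
          (SimpleGraph.Adj.reachable ⟨(hne w).symm, Or.inr rfl⟩)
      · refine SimpleGraph.ConnectedComponent.sound
          ((SimpleGraph.Adj.reachable ?_).trans
            (SimpleGraph.Adj.reachable ⟨(hne w).symm, Or.inr rfl⟩))
        exact ⟨(hne (σ w)).symm, Or.inr rfl⟩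
  haveI : Fintype (sigmaGraph σ).ConnectedComponent := Fintype.ofFinite _
  refine ⟨key, ?_⟩
  have hsum : X.card = ∑ c : (sigmaGraph σ).ConnectedComponent,
      (X.filter (fun x => (sigmaGraph σ).connectedComponentMk x = c)).card :=
    Finset.card_eq_sum_card_fiberwise (fun x _ => Finset.mem_univ _)
  have hfib : ∀ c : (sigmaGraph σ).ConnectedComponent,
      2 ≤ (X.filter (fun x => (sigmaGraph σ).connectedComponentMk x = c)).card := by
    intro c
    obtain ⟨a, b, ha, hb, hab, hac, hbc⟩ := key c
    have hsub : ({a, b} : Finset W) ⊆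
        X.filter (fun x => (sigmaGraph σ).connectedComponentMk x = c) := by
      intro x hx
      simp only [Finset.mem_insert, Finset.mem_singleton] at hx
      rcases hx with rfl | rfl <;> simp [Finset.mem_filter, ha, hb, hac, hbc]
    calc 2 = ({a, b} : Finset W).card := (Finset.card_pair hab).symm
      _ ≤ _ := Finset.card_le_card hsub
  calc 2 * Nat.card (sigmaGraph σ).ConnectedComponent
      = ∑ _c : (sigmaGraph σ).ConnectedComponent, 2 := by
        simp [Nat.card_eq_fintype_card, Finset.sum_const, mul_comm]
    _ ≤ _ := Finset.sum_le_sum (fun c _ => hfib c)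
    _ = X.card := hsum.symm
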